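/- For any locally bounded function f : ℝⁿ → ℝ and γ > 0, the function x ↦ M^γ(M_γ f)(x) + (1/(2γ))‖x‖² equals the biconjugate (double Fenchel conjugate) of the function x ↦ f(x) + (1/(2γ))‖x‖². -/

import Mathlib

open scoped RealInnerProductSpace
open Filter Topology

noncomputable section

/-- Lower Moreau envelope (extended-real valued). -/
def lowerEnv {n : ℕ} (γ : ℝ) (f : EuclideanSpace ℝ (Fin n) → ℝ)
    (x : EuclideanSpace ℝ (Fin n)) : EReal :=
  ⨅ y, ((f y + ‖y - x‖ ^ 2 / (2 * γ) : ℝ) : EReal)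

/-- Upper Moreau envelope of an extended-real valued function. -/
def upperEnvE {n : ℕ} (γ : ℝ) (g : EuclideanSpace ℝ (Fin n) → EReal)
    (x : EuclideanSpace ℝ (Fin n)) : EReal :=
  ⨆ y, (g y - ((‖y - x‖ ^ 2 / (2 * γ) : ℝ) : EReal))

/-- Fenchel (convex) conjugate of an extended-real valued function. -/
def fenchelConj {n : ℕ} (h : EuclideanSpace ℝ (Fin n) → EReal)
    (x : EuclideanSpace ℝ (Fin n)) : EReal :=
  ⨆ y, (((⟪x, y⟫ : ℝ) : EReal) - h y)

/-- Adding a real constant is an order isomorphism of `EReal`. -/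
def addCoeIso (c : ℝ) : EReal ≃o EReal where
  toFun a := a + (c : EReal)
  invFun a := a - (c : EReal)
  left_inv a := EReal.add_sub_cancel_right
  right_inv a := EReal.sub_add_cancel
  map_rel_iff' := by
    intro a b
    exact (EReal.addLECancellable_coe c).add_le_add_iff_right

lemma ereal_iSup_add_coe {ι : Sort*} (h : ι → EReal) (c : ℝ) :
    (⨆ i, h i) + (c : EReal) = ⨆ i, (h i + (c : EReal)) :=
  (addCoeIso c).map_iSup h

lemma ereal_iInf_add_coe {ι : Sort*} (h : ι → EReal) (c : ℝ) :
    (⨅ i, h i) + (c : EReal) = ⨅ i, (h i + (c : EReal)) :=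
  (addCoeIso c).map_iInf h

lemma ereal_iInf_neg {ι : Sort*} (h : ι → EReal) :
    (⨅ i, -(h i)) = -(⨆ i, h i) := by
  apply le_antisymm
  · have : (⨆ i, h i) ≤ -(⨅ i, -(h i)) :=
      iSup_le fun i => EReal.le_neg_of_le_neg (iInf_le _ i)
    exact EReal.le_neg_of_le_neg this
  · exact le_iInf fun i => EReal.neg_le_neg_iff.mpr (le_iSup _ i)

lemma coe_sub_add_coe (a b : ℝ) (E : EReal) :
    (a : EReal) - E + (b : EReal) = ((a + b : ℝ) : EReal) - E := by
  rw [sub_eq_add_neg, sub_eq_add_neg, add_right_comm, ← EReal.coe_add]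

theorem stmt_1 {n : ℕ} (γ : ℝ) (hγ : 0 < γ) (f : EuclideanSpace ℝ (Fin n) → ℝ)
    (hlb : ∀ x, ∃ C r : ℝ, 0 < r ∧ ∀ y, dist y x < r → |f y| ≤ C)
    (x : EuclideanSpace ℝ (Fin n)) :
    upperEnvE γ (lowerEnv γ f) x + ((‖x‖ ^ 2 / (2 * γ) : ℝ) : EReal)
      = fenchelConj (fenchelConj (fun y => ((f y + ‖y‖ ^ 2 / (2 * γ) : ℝ) : EReal))) x := by
  have hγ0 : γ ≠ 0 := hγ.ne'
  set g : EuclideanSpace ℝ (Fin n) → ℝ := fun y => f y + ‖y‖ ^ 2 / (2 * γ) with hg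
  set G : EuclideanSpace ℝ (Fin n) → EReal :=
    fenchelConj (fun y => ((g y : ℝ) : EReal)) with hG
  -- G as a sup of real terms
  have hGsup : ∀ w, G w = ⨆ y, ((⟪w, y⟫ - g y : ℝ) : EReal) := by
    intro w
    simp only [hG, fenchelConj, EReal.coe_sub]
  -- Step 1: the lower envelope in terms of G
  have step1 : ∀ z, lowerEnv γ f z
      = ((‖z‖ ^ 2 / (2 * γ) : ℝ) : EReal) - G (γ⁻¹ • z) := by
    intro z
    have hterm : ∀ y : EuclideanSpace ℝ (Fin n),
        (f y + ‖y - z‖ ^ 2 / (2 * γ) : ℝ)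
          = -(⟪γ⁻¹ • z, y⟫ - g y) + ‖z‖ ^ 2 / (2 * γ) := by
      intro y
      have h1 : ‖y - z‖ ^ 2 = ‖y‖ ^ 2 - 2 * ⟪y, z⟫ + ‖z‖ ^ 2 := norm_sub_sq_real y z
      have h2 : ⟪γ⁻¹ • z, y⟫ = γ⁻¹ * ⟪y, z⟫ := by
        rw [real_inner_smul_left, real_inner_comm]
      rw [h1, h2, hg]
      field_simp
      ring
    calc lowerEnv γ f z
        = ⨅ y, (((-(⟪γ⁻¹ • z, y⟫ - g y) : ℝ) : EReal) + ((‖z‖ ^ 2 / (2 * γ) : ℝ) : EReal)) := by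
          rw [lowerEnv]
          refine iInf_congr fun y => ?_
          rw [hterm y, EReal.coe_add]
      _ = (⨅ y, ((-(⟪γ⁻¹ • z, y⟫ - g y) : ℝ) : EReal)) + ((‖z‖ ^ 2 / (2 * γ) : ℝ) : EReal) := by
          rw [ereal_iInf_add_coe]
      _ = -(⨆ y, ((⟪γ⁻¹ • z, y⟫ - g y : ℝ) : EReal)) + ((‖z‖ ^ 2 / (2 * γ) : ℝ) : EReal) := by
          congr 1
          rw [← ereal_iInf_neg]
          exact iInf_congr fun y => EReal.coe_neg _
      _ = ((‖z‖ ^ 2 / (2 * γ) : ℝ) : EReal) - G (γ⁻¹ • z) := by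
          rw [hGsup, add_comm, sub_eq_add_neg]
  -- Step 2
  have hsurj : Function.Surjective (fun z : EuclideanSpace ℝ (Fin n) => γ⁻¹ • z) := by
    intro w
    exact ⟨γ • w, by simp [smul_smul, inv_mul_cancel₀ hγ0]⟩
  have step2 : upperEnvE γ (lowerEnv γ f) x
      = ⨆ w, (((⟪x, w⟫ - ‖x‖ ^ 2 / (2 * γ) : ℝ) : EReal) - G w) := by
    rw [upperEnvE]
    have hterm : ∀ z, lowerEnv γ f z - ((‖z - x‖ ^ 2 / (2 * γ) : ℝ) : EReal)
        = ((⟪x, γ⁻¹ • z⟫ - ‖x‖ ^ 2 / (2 * γ) : ℝ) : EReal) - G (γ⁻¹ • z) := by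
      intro z
      rw [step1 z, sub_eq_add_neg _ ((‖z - x‖ ^ 2 / (2 * γ) : ℝ) : EReal), ← EReal.coe_neg,
        coe_sub_add_coe]
      congr 2
      have h1 : ‖z - x‖ ^ 2 = ‖z‖ ^ 2 - 2 * ⟪z, x⟫ + ‖x‖ ^ 2 := norm_sub_sq_real z x
      have h2 : ⟪x, γ⁻¹ • z⟫ = γ⁻¹ * ⟪z, x⟫ := by
        rw [real_inner_smul_right, real_inner_comm]
      rw [h1, h2]
      field_simp
      ring
    calc (⨆ z, (lowerEnv γ f z - ((‖z - x‖ ^ 2 / (2 * γ) : ℝ) : EReal)))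
        = ⨆ z, (((⟪x, γ⁻¹ • z⟫ - ‖x‖ ^ 2 / (2 * γ) : ℝ) : EReal) - G (γ⁻¹ • z)) :=
          iSup_congr hterm
      _ = ⨆ w, (((⟪x, w⟫ - ‖x‖ ^ 2 / (2 * γ) : ℝ) : EReal) - G w) :=
          hsurj.iSup_comp (fun w => ((⟪x, w⟫ - ‖x‖ ^ 2 / (2 * γ) : ℝ) : EReal) - G w)
  rw [step2, ereal_iSup_add_coe]
  rw [show fenchelConj (fenchelConj (fun y => ((f y + ‖y‖ ^ 2 / (2 * γ) : ℝ) : EReal))) x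
      = fenchelConj G x from rfl]
  rw [fenchelConj]
  refine iSup_congr fun w => ?_
  rw [coe_sub_add_coe]
  congr 1
  norm_num
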